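/- Let (C^1, …, C^k) be an admissible family in ℝ^n and let b^i ∈ C^i for each i. Then the affine hull of Q(C^1,…,C^k) equals {(x, y) ∈ ℝ^n × ℝ^k : Σ_{i=1}^k y_i = 1 and x − Σ_{i=1}^k y_i b^i ∈ L(C^1,…,C^k)}, where L(C^1,…,C^k) := L(C^1) + … + L(C^k). -/

import Mathlib

open Pointwise Set

noncomputable section

/-- The recession cone of a set. -/
def recCone {E : Type*} [AddCommGroup E] [Module ℝ E] (S : Set E) : Set E :=
  {d | ∀ x ∈ S, ∀ t : ℝ, 0 ≤ t → x + t • d ∈ S}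

/-- An admissible family: each member is a nonempty closed convex set and all members share
the same recession cone. -/
def Admissible {n k : ℕ} (C : Fin k → Set (Fin n → ℝ)) : Prop :=
  (∀ i, (C i).Nonempty) ∧ (∀ i, IsClosed (C i)) ∧ (∀ i, Convex ℝ (C i)) ∧
    ∀ i j, recCone (C i) = recCone (C j)

/-- The Cayley embedding `Q(C¹,…,Cᵏ) = conv(⋃ᵢ Cⁱ × {eⁱ})`. -/
def CayleyQ {n k : ℕ} (C : Fin k → Set (Fin n → ℝ)) :
    Set ((Fin n → ℝ) × (Fin k → ℝ)) :=
  convexHull ℝ (⋃ i, (C i) ×ˢ ({Pi.single i 1} : Set (Fin k → ℝ)))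

/-- The affine hull of the Cayley embedding. Here `L(Cⁱ)` is the direction space of the
affine hull of `Cⁱ`, and `L(C¹,…,Cᵏ)` is the (sup =) sum of these subspaces. -/
theorem stmt10 {n k : ℕ} (C : Fin k → Set (Fin n → ℝ)) (hC : Admissible C)
    (b : Fin k → Fin n → ℝ) (hb : ∀ i, b i ∈ C i) :
    (affineSpan ℝ (CayleyQ C) : Set ((Fin n → ℝ) × (Fin k → ℝ))) =
      {p | (∑ i, p.2 i = 1) ∧
        p.1 - ∑ i, p.2 i • b i ∈ (⨆ i, (affineSpan ℝ (C i)).direction : Submodule ℝ (Fin n → ℝ))} := by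
  classical
  set U : Set ((Fin n → ℝ) × (Fin k → ℝ)) :=
    ⋃ i, (C i) ×ˢ ({Pi.single i 1} : Set (Fin k → ℝ)) with hU
  set V : Submodule ℝ (Fin n → ℝ) := ⨆ i, (affineSpan ℝ (C i)).direction with hV
  have hspan : affineSpan ℝ (CayleyQ C) = affineSpan ℝ U := by
    rw [CayleyQ, affineSpan_convexHull]
  -- the candidate affine subspace for the RHS
  let S : AffineSubspace ℝ ((Fin n → ℝ) × (Fin k → ℝ)) :=
    { carrier := {p | (∑ i, p.2 i = 1) ∧ p.1 - ∑ i, p.2 i • b i ∈ V}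
      smul_vsub_vadd_mem' := by
        rintro c p1 p2 p3 ⟨h1, h1'⟩ ⟨h2, h2'⟩ ⟨h3, h3'⟩
        constructor
        · have : ∑ i, (c • (p1 -ᵥ p2) +ᵥ p3).2 i
              = c * (∑ i, p1.2 i) - c * (∑ i, p2.2 i) + ∑ i, p3.2 i := by
            simp [Finset.mul_sum, Finset.sum_add_distrib, ← Finset.sum_sub_distrib,
              mul_sub]
          rw [this, h1, h2, h3]; ring
        · have key : (c • (p1 -ᵥ p2) +ᵥ p3).1 - ∑ i, (c • (p1 -ᵥ p2) +ᵥ p3).2 i • b i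
              = c • ((p1.1 - ∑ i, p1.2 i • b i) - (p2.1 - ∑ i, p2.2 i • b i))
                + (p3.1 - ∑ i, p3.2 i • b i) := by
            have hsum : ∑ i, (c * (p1.2 i - p2.2 i) + p3.2 i) • b i
                = c • (∑ i, p1.2 i • b i) - c • (∑ i, p2.2 i • b i)
                  + ∑ i, p3.2 i • b i := by
              rw [Finset.smul_sum, Finset.smul_sum, ← Finset.sum_sub_distrib,
                ← Finset.sum_add_distrib]
              refine Finset.sum_congr rfl fun i _ => ?_
              module
            simp only [Prod.smul_fst, Prod.smul_snd, Prod.fst_vsub, Prod.snd_vsub,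
              Prod.fst_add, Prod.snd_add, vsub_eq_sub, vadd_eq_add, Prod.fst_sub, Prod.snd_sub,
              Pi.add_apply, Pi.smul_apply, Pi.sub_apply, smul_eq_mul]
            rw [hsum]
            module
          rw [key]
          exact V.add_mem (V.smul_mem _ (V.sub_mem h1' h2')) h3' }
  have hUS : U ⊆ (S : Set _) := by
    rintro p hp
    simp only [hU, Set.mem_iUnion, Set.mem_prod, Set.mem_singleton_iff] at hp
    obtain ⟨i, hpc, hpe⟩ := hp
    constructor
    · simp [hpe]
    · have h1 : ∑ j, p.2 j • b j = b i := by
        rw [hpe]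
        rw [Finset.sum_eq_single i]
        · simp
        · intro j _ hj; simp [Pi.single_apply, Ne.symm hj]
        · simp
      rw [h1]
      have : p.1 - b i ∈ (affineSpan ℝ (C i)).direction := by
        have := AffineSubspace.vsub_mem_direction
          (subset_affineSpan ℝ (C i) hpc) (subset_affineSpan ℝ (C i) (hb i))
        simpa using this
      exact Submodule.mem_iSup_of_mem i this
  ext p
  constructor
  · intro hp
    rw [hspan] at hp
    exact affineSpan_le.2 hUS hp
  · rintro ⟨hy, hx⟩
    rcases isEmpty_or_nonempty (Fin k) with hk | hk
    · exfalso
      rw [Finset.sum_of_isEmpty] at hy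
      exact one_ne_zero hy.symm
    · obtain ⟨i₀⟩ := hk
      have hb0 : ((b i₀, Pi.single i₀ 1) : (Fin n → ℝ) × (Fin k → ℝ)) ∈ affineSpan ℝ U :=
        subset_affineSpan ℝ U (Set.mem_iUnion.2 ⟨i₀, ⟨hb i₀, rfl⟩⟩)
      rw [hspan, SetLike.mem_coe,
        ← AffineSubspace.vsub_right_mem_direction_iff_mem hb0]
      set D := (affineSpan ℝ U).direction with hD
      -- generators of type 1
      have hgen1 : ∀ i, ∀ w ∈ (affineSpan ℝ (C i)).direction,
          ((w, 0) : (Fin n → ℝ) × (Fin k → ℝ)) ∈ D := by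
        intro i w hw
        rw [direction_affineSpan, vectorSpan_def] at hw
        induction hw using Submodule.span_induction with
        | mem z hz =>
          obtain ⟨c, hc, c', hc', rfl⟩ := hz
          have h1 : ((c, Pi.single i 1) : (Fin n → ℝ) × (Fin k → ℝ)) ∈ affineSpan ℝ U :=
            subset_affineSpan ℝ U (Set.mem_iUnion.2 ⟨i, ⟨hc, rfl⟩⟩)
          have h2 : ((c', Pi.single i 1) : (Fin n → ℝ) × (Fin k → ℝ)) ∈ affineSpan ℝ U :=
            subset_affineSpan ℝ U (Set.mem_iUnion.2 ⟨i, ⟨hc', rfl⟩⟩)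
          have := AffineSubspace.vsub_mem_direction h1 h2
          simpa [Prod.ext_iff, vsub_eq_sub] using this
        | zero => exact D.zero_mem
        | add z z' _ _ hz hz' =>
          have : ((z + z', (0 : Fin k → ℝ)) : (Fin n → ℝ) × (Fin k → ℝ))
              = (z, 0) + (z', 0) := by simp [Prod.ext_iff]
          rw [this]; exact D.add_mem hz hz'
        | smul a z _ hz =>
          have : ((a • z, (0 : Fin k → ℝ)) : (Fin n → ℝ) × (Fin k → ℝ))
              = a • (z, 0) := by simp [Prod.ext_iff]
          rw [this]; exact D.smul_mem a hz
      have hgen2 : ∀ i, ((b i, Pi.single i 1) : (Fin n → ℝ) × (Fin k → ℝ))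
          - (b i₀, Pi.single i₀ 1) ∈ D := by
        intro i
        have h1 : ((b i, Pi.single i 1) : (Fin n → ℝ) × (Fin k → ℝ)) ∈ affineSpan ℝ U :=
          subset_affineSpan ℝ U (Set.mem_iUnion.2 ⟨i, ⟨hb i, rfl⟩⟩)
        have := AffineSubspace.vsub_mem_direction h1 hb0
        simpa [vsub_eq_sub] using this
      -- decompose x - ∑ yᵢ bⁱ
      rw [hV, Submodule.mem_iSup_iff_exists_finsupp] at hx
      obtain ⟨f, hf, hfsum⟩ := hx
      have hfsum' : ∑ i, f i = p.1 - ∑ i, p.2 i • b i := by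
        rw [← hfsum, Finsupp.sum_fintype]
        intro; rfl
      -- the decomposition of p - (b i₀, e i₀)
      have key : p -ᵥ ((b i₀, Pi.single i₀ 1) : (Fin n → ℝ) × (Fin k → ℝ))
          = (∑ i, ((f i, 0) : (Fin n → ℝ) × (Fin k → ℝ)))
            + ∑ i, p.2 i • (((b i, Pi.single i 1) : (Fin n → ℝ) × (Fin k → ℝ))
              - (b i₀, Pi.single i₀ 1)) := by
        apply Prod.ext
        · simp only [Prod.fst_add, Prod.fst_sum, Prod.smul_fst, Prod.fst_sub, vsub_eq_sub,
            Prod.fst_sub, smul_sub]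
          rw [Finset.sum_sub_distrib, hfsum']
          have : ∑ i, p.2 i • b i₀ = b i₀ := by
            rw [← Finset.sum_smul, hy, one_smul]
          rw [this]
          abel
        · simp only [Prod.snd_add, Prod.snd_sum, Prod.smul_snd, Prod.snd_sub, vsub_eq_sub,
            smul_sub]
          rw [Finset.sum_sub_distrib]
          have h1 : ∑ i, p.2 i • (Pi.single i 1 : Fin k → ℝ) = p.2 := by
            funext j
            simp only [Finset.sum_apply, Pi.smul_apply, smul_eq_mul]
            rw [Finset.sum_eq_single j]
            · simp
            · intro i _ hi; simp [Pi.single_apply, hi]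
            · simp
          have h2 : ∑ i, p.2 i • (Pi.single i₀ 1 : Fin k → ℝ) = Pi.single i₀ 1 := by
            rw [← Finset.sum_smul, hy, one_smul]
          rw [h1, h2]
          simp
      rw [key]
      exact D.add_mem
        (Submodule.sum_mem _ (fun i _ => hgen1 i (f i) (hf i)))
        (Submodule.sum_mem _ (fun i _ => D.smul_mem _ (hgen2 i)))
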